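/- For a real signal x : ZMod N → ℝ with all DFT coefficients of unit modulus (|x̂[k]| = 1 for all k) and x̂[1] = 1, the N-1 bispectrum entries {M₃(x)[k, -1] : k = 2, …, N-1} together with x̂[0] determine all Fourier coefficients x̂[k], and hence x, uniquely among such signals. -/

import Mathlib

open Finset in
noncomputable def dft (N : ℕ) [NeZero N] (x : ZMod N → ℂ) (k : ZMod N) : ℂ :=
  ∑ n : ZMod N, x n * Complex.exp (-2 * Real.pi * Complex.I * ((k.val : ℂ) * (n.val : ℂ)) / N)

noncomputable def bispectrum (N : ℕ) [NeZero N] (x : ZMod N → ℂ) (k₁ k₂ : ZMod N) : ℂ :=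
  dft N x k₁ * dft N x k₂ * dft N x (-(k₁ + k₂))

open Complex Finset

set_option maxHeartbeats 800000

lemma exp_congr_aux (N : ℕ) [NeZero N] {m₁ m₂ : ℤ} (h : (m₁ : ZMod N) = m₂) :
    Complex.exp (-2 * Real.pi * Complex.I * m₁ / N) =
    Complex.exp (-2 * Real.pi * Complex.I * m₂ / N) := by
  have hz : ((m₁ - m₂ : ℤ) : ZMod N) = 0 := by push_cast; rw [h]; ring
  obtain ⟨t, ht⟩ := (ZMod.intCast_zmod_eq_zero_iff_dvd _ _).mp hz
  have hm : m₁ = m₂ + N * t := by linarith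
  have hNC : (N : ℂ) ≠ 0 := Nat.cast_ne_zero.mpr (NeZero.ne N)
  have key : (-2 * Real.pi * Complex.I * m₁ / N) =
      (-2 * Real.pi * Complex.I * m₂ / N) + ((-t : ℤ) : ℂ) * (2 * Real.pi * Complex.I) := by
    rw [hm]; push_cast; field_simp; ring
  rw [key, Complex.exp_add, Complex.exp_int_mul_two_pi_mul_I, mul_one]

lemma dft_real_neg (N : ℕ) [NeZero N] (x : ZMod N → ℝ) (k : ZMod N) :
    dft N (fun n => (x n : ℂ)) (-k) = starRingEnd ℂ (dft N (fun n => (x n : ℂ)) k) := by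
  unfold dft
  rw [map_sum]
  refine Finset.sum_congr rfl fun n _ => ?_
  rw [map_mul, Complex.conj_ofReal, ← Complex.exp_conj]
  congr 1
  have h1 : (starRingEnd ℂ) (-2 * Real.pi * Complex.I * ((k.val : ℂ) * (n.val : ℂ)) / N) =
      -2 * Real.pi * Complex.I * (Int.cast (-((k.val : ℤ) * (n.val : ℤ))) : ℂ) / N := by
    simp only [map_div₀, map_mul, map_neg, map_ofNat, Complex.conj_ofReal, Complex.conj_I,
      map_natCast]
    push_cast
    ring
  rw [h1]
  have h2 : (-2 : ℂ) * Real.pi * Complex.I * (((-k).val : ℂ) * ((n.val : ℂ))) / N =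
      -2 * Real.pi * Complex.I * (Int.cast ((((-k).val : ℤ) * (n.val : ℤ))) : ℂ) / N := by push_cast; ring
  rw [h2]
  have hzm : (Int.cast ((((-k).val : ℤ) * (n.val : ℤ))) : ZMod N)
      = (Int.cast (-((k.val : ℤ) * (n.val : ℤ))) : ZMod N) := by
    push_cast [ZMod.natCast_val, ZMod.cast_id]; ring
  exact exp_congr_aux N (m₁ := (((-k).val : ℤ) * (n.val : ℤ))) (m₂ := -((k.val : ℤ) * (n.val : ℤ))) hzm
lemma dft_inversion (N : ℕ) [NeZero N] (z : ZMod N → ℂ) (n : ZMod N) :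
    ∑ k : ZMod N, dft N z k *
      Complex.exp (2 * Real.pi * Complex.I * ((k.val : ℂ) * (n.val : ℂ)) / N) = N * z n := by
  have hNC : (N : ℂ) ≠ 0 := Nat.cast_ne_zero.mpr (NeZero.ne N)
  have key : ∀ m : ZMod N,
      (∑ k : ZMod N, Complex.exp (-2 * Real.pi * Complex.I * ((k.val : ℂ) * (m.val : ℂ)) / N) *
        Complex.exp (2 * Real.pi * Complex.I * ((k.val : ℂ) * (n.val : ℂ)) / N)) =
      if m = n then (N : ℂ) else 0 := by
    intro m
    have hterm : ∀ k : ZMod N,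
        Complex.exp (-2 * Real.pi * Complex.I * ((k.val : ℂ) * (m.val : ℂ)) / N) *
          Complex.exp (2 * Real.pi * Complex.I * ((k.val : ℂ) * (n.val : ℂ)) / N) =
        Complex.exp (-2 * Real.pi * Complex.I *
          (Int.cast ((m.val : ℤ) - (n.val : ℤ)) : ℂ) / N) ^ (k.val) := by
      intro k
      rw [← Complex.exp_add, ← Complex.exp_nat_mul]
      congr 1
      push_cast
      field_simp
      ring
    simp_rw [hterm]
    set w : ℂ := Complex.exp (-2 * Real.pi * Complex.I *
      (Int.cast ((m.val : ℤ) - (n.val : ℤ)) : ℂ) / N) with hw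
    have hsum : ∑ k : ZMod N, w ^ k.val = ∑ j ∈ Finset.range N, w ^ j := by
      refine Finset.sum_nbij' (fun k => k.val) (fun j => (j : ZMod N)) ?_ ?_ ?_ ?_ ?_
      · intro k _; exact Finset.mem_range.mpr (ZMod.val_lt k)
      · intros; exact Finset.mem_univ _
      · intro k _; simp [ZMod.natCast_val, ZMod.cast_id]
      · intro j hj; exact ZMod.val_natCast_of_lt (Finset.mem_range.mp hj)
      · intros; rfl
    rw [hsum]
    by_cases hmn : m = n
    · subst hmn
      simp [hw]
    · rw [if_neg hmn]
      have hwN : w ^ N = 1 := by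
        rw [hw, ← Complex.exp_nat_mul]
        have harg : (N : ℂ) * (-2 * Real.pi * Complex.I *
            (Int.cast ((m.val : ℤ) - (n.val : ℤ)) : ℂ) / N) =
            ((-((m.val : ℤ) - n.val) : ℤ) : ℂ) * (2 * Real.pi * Complex.I) := by
          push_cast; field_simp
        rw [harg, Complex.exp_int_mul_two_pi_mul_I]
      have hw1 : w ≠ 1 := by
        intro hcontr
        rw [hw, Complex.exp_eq_one_iff] at hcontr
        obtain ⟨q, hq⟩ := hcontr
        have hpi : (Real.pi : ℂ) ≠ 0 := Complex.ofReal_ne_zero.mpr Real.pi_ne_zero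
        have h2pi : (2 : ℂ) * Real.pi * Complex.I ≠ 0 := by
          simp [hpi, Complex.I_ne_zero]
        rw [div_eq_iff hNC] at hq
        have hq' : (Int.cast ((m.val : ℤ) - (n.val : ℤ)) : ℂ) * ((2 : ℂ) * Real.pi * Complex.I)
            = ((-q) * N) * ((2 : ℂ) * Real.pi * Complex.I) := by
          linear_combination -hq
        have ht := mul_right_cancel₀ h2pi hq'
        have htz : ((m.val : ℤ) - n.val) = -q * N := by exact_mod_cast ht
        have hzm : (Int.cast ((m.val : ℤ) - (n.val : ℤ)) : ZMod N) = 0 := by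
          rw [htz]; push_cast; simp
        push_cast [ZMod.natCast_val, ZMod.cast_id] at hzm
        exact hmn (sub_eq_zero.mp hzm)
      have hgeo := geom_sum_mul w N
      rw [hwN, sub_self] at hgeo
      exact (mul_eq_zero.mp hgeo).resolve_right (sub_ne_zero.mpr hw1)
  unfold dft
  calc ∑ k : ZMod N, (∑ m : ZMod N,
          z m * Complex.exp (-2 * Real.pi * Complex.I * ((k.val : ℂ) * (m.val : ℂ)) / N)) *
        Complex.exp (2 * Real.pi * Complex.I * ((k.val : ℂ) * (n.val : ℂ)) / N)
      = ∑ k : ZMod N, ∑ m : ZMod N, z m *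
          (Complex.exp (-2 * Real.pi * Complex.I * ((k.val : ℂ) * (m.val : ℂ)) / N) *
           Complex.exp (2 * Real.pi * Complex.I * ((k.val : ℂ) * (n.val : ℂ)) / N)) := by
        refine Finset.sum_congr rfl fun k _ => ?_
        rw [Finset.sum_mul]
        exact Finset.sum_congr rfl fun m _ => by ring
    _ = ∑ m : ZMod N, ∑ k : ZMod N, z m *
          (Complex.exp (-2 * Real.pi * Complex.I * ((k.val : ℂ) * (m.val : ℂ)) / N) *
           Complex.exp (2 * Real.pi * Complex.I * ((k.val : ℂ) * (n.val : ℂ)) / N)) :=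
        Finset.sum_comm
    _ = ∑ m : ZMod N, z m * (if m = n then (N : ℂ) else 0) := by
        refine Finset.sum_congr rfl fun m _ => ?_
        rw [← Finset.mul_sum, key m]
    _ = N * z n := by
        rw [Finset.sum_eq_single n]
        · simp [mul_comm]
        · intro b _ hb; simp [hb]
        · intro h; exact absurd (Finset.mem_univ n) h

theorem bispectrum_column_determines_unimodular (N : ℕ) [NeZero N] (hN : 2 ≤ N)
    (x y : ZMod N → ℝ)
    (hxu : ∀ k, ‖dft N (fun n => (x n : ℂ)) k‖ = 1)
    (hyu : ∀ k, ‖dft N (fun n => (y n : ℂ)) k‖ = 1)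
    (hx1 : dft N (fun n => (x n : ℂ)) 1 = 1)
    (hy1 : dft N (fun n => (y n : ℂ)) 1 = 1)
    (h0 : dft N (fun n => (y n : ℂ)) 0 = dft N (fun n => (x n : ℂ)) 0)
    (hM : ∀ k, bispectrum N (fun n => (y n : ℂ)) k (-1)
            = bispectrum N (fun n => (x n : ℂ)) k (-1)) :
    (∀ k, dft N (fun n => (y n : ℂ)) k = dft N (fun n => (x n : ℂ)) k) ∧ y = x := by
  have step : ∀ (z : ZMod N → ℝ), (∀ k, ‖dft N (fun n => (z n : ℂ)) k‖ = 1) →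
      dft N (fun n => (z n : ℂ)) 1 = 1 → ∀ k : ZMod N,
      dft N (fun n => (z n : ℂ)) k =
        bispectrum N (fun n => (z n : ℂ)) k (-1) * dft N (fun n => (z n : ℂ)) (k - 1) := by
    intro z hzu hz1 k
    have hneg1 : dft N (fun n => (z n : ℂ)) (-1) = 1 := by
      rw [dft_real_neg N z 1, hz1, map_one]
    have hnk : dft N (fun n => (z n : ℂ)) (-(k + -1)) =
        starRingEnd ℂ (dft N (fun n => (z n : ℂ)) (k - 1)) := by
      rw [show -(k + -1) = -(k - 1) by ring, dft_real_neg]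
    have hunit : starRingEnd ℂ (dft N (fun n => (z n : ℂ)) (k - 1)) *
        dft N (fun n => (z n : ℂ)) (k - 1) = 1 := by
      rw [mul_comm, Complex.mul_conj, ← Complex.sq_norm, hzu, one_pow, Complex.ofReal_one]
    unfold bispectrum
    rw [hneg1, hnk, mul_one, mul_assoc, hunit, mul_one]
  have main : ∀ m : ℕ, dft N (fun n => (y n : ℂ)) (m : ZMod N) =
      dft N (fun n => (x n : ℂ)) (m : ZMod N) := by
    intro m
    induction m with
    | zero => simpa using h0
    | succ m ih =>
        have hk : ((m + 1 : ℕ) : ZMod N) - 1 = (m : ZMod N) := by push_cast; ring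
        rw [step y hyu hy1, step x hxu hx1, hk, hM, ih]
  have hdft : ∀ k, dft N (fun n => (y n : ℂ)) k = dft N (fun n => (x n : ℂ)) k := by
    intro k
    have := main k.val
    rwa [ZMod.natCast_val, ZMod.cast_id] at this
  refine ⟨hdft, ?_⟩
  funext n
  have hy' := dft_inversion N (fun n => (y n : ℂ)) n
  have hx' := dft_inversion N (fun n => (x n : ℂ)) n
  have heq : (N : ℂ) * (y n : ℂ) = (N : ℂ) * (x n : ℂ) := by
    rw [← hy', ← hx']
    exact Finset.sum_congr rfl fun k _ => by rw [hdft k]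
  have hNC : (N : ℂ) ≠ 0 := Nat.cast_ne_zero.mpr (NeZero.ne N)
  have hfin := mul_left_cancel₀ hNC heq
  exact_mod_cast hfin
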